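/- Let A₁,…,A_q be positive semidefinite n×n matrices of ranks r₁,…,r_q with Aᵢ = BᵢBᵢᵀ, Bᵢ ∈ ℝ^{n×rᵢ}, satisfying the rank spread condition: m := Σ rᵢ ≤ n and dim span{columns of all Bᵢ} = m. Then there exists an invertible P ∈ ℝ^{n×n} such that Pᵀ Aᵢ P = Eᵢ for each i, where Eᵢ is the diagonal 0/1 matrix whose ones are exactly in positions Nᵢ = {m_{i−1}+1,…,m_i} (mᵢ = r₁+⋯+rᵢ). -/

import Mathlib

open Matrix

section Aux

variable {q : ℕ} (r : Fin q → ℕ)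

/-- Offset of the `i`-th block. -/
def stmt4Off (i : Fin q) : ℕ := ∑ l ∈ Finset.univ.filter (· < i), r l

lemma stmt4Off_add_le (i : Fin q) : stmt4Off r i + r i ≤ ∑ l, r l := by
  have hnot : i ∉ Finset.univ.filter (· < i) := by simp
  have h2 : ∑ l ∈ insert i (Finset.univ.filter (· < i)), r l ≤ ∑ l, r l :=
    Finset.sum_le_sum_of_subset (Finset.subset_univ _)
  rw [Finset.sum_insert hnot] at h2
  unfold stmt4Off
  omega

lemma stmt4Off_mono {i i' : Fin q} (h : i < i') : stmt4Off r i + r i ≤ stmt4Off r i' := by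
  have hnot : i ∉ Finset.univ.filter (· < i) := by simp
  have hsub : insert i (Finset.univ.filter (· < i)) ⊆ Finset.univ.filter (· < i') := by
    intro x hx
    simp only [Finset.mem_insert, Finset.mem_filter, Finset.mem_univ, true_and] at hx ⊢
    rcases hx with rfl | hx
    · exact h
    · exact hx.trans h
  have h2 := Finset.sum_le_sum_of_subset (f := r) hsub
  rw [Finset.sum_insert hnot] at h2
  unfold stmt4Off
  omega

variable {n : ℕ} (hm : ∑ i, r i ≤ n)

/-- The embedding of block positions into `Fin n`. -/
def stmt4Emb (s : Σ i : Fin q, Fin (r i)) : Fin n :=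
  ⟨stmt4Off r s.1 + s.2, by
    have h1 : (s.2 : ℕ) < r s.1 := s.2.isLt
    have h2 := stmt4Off_add_le r s.1
    omega⟩

lemma stmt4Emb_injective : Function.Injective (stmt4Emb r hm) := by
  rintro ⟨i, j⟩ ⟨i', j'⟩ h
  simp only [stmt4Emb, Fin.mk.injEq] at h
  rcases lt_trichotomy i i' with hlt | heq | hgt
  · exfalso
    have := stmt4Off_mono r hlt
    have hj : (j : ℕ) < r i := j.isLt
    omega
  · subst heq
    have : (j : ℕ) = j' := by omega
    simp [Fin.ext_iff, this]
  · exfalso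
    have := stmt4Off_mono r hgt
    have hj : (j' : ℕ) < r i' := j'.isLt
    omega

end Aux

/-- Under the rank spread condition, there is an invertible `P` with
`Pᵀ Aᵢ P = Eᵢ`, `Eᵢ` the 0/1 diagonal matrix supported on the block
`Nᵢ = {m_{i-1}+1, …, m_i}`. -/
theorem stmt4 {n q : ℕ} (A : Fin q → Matrix (Fin n) (Fin n) ℝ)
    (r : Fin q → ℕ) (B : (i : Fin q) → Matrix (Fin n) (Fin (r i)) ℝ)
    (hApsd : ∀ i, (A i).PosSemidef)
    (hrank : ∀ i, (A i).rank = r i)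
    (hB : ∀ i, A i = B i * (B i)ᵀ)
    (hm : ∑ i, r i ≤ n)
    (hspread : Module.finrank ℝ
      (Submodule.span ℝ {v : Fin n → ℝ | ∃ i : Fin q, ∃ j : Fin (r i), v = fun a => B i a j})
        = ∑ i, r i) :
    ∃ P : Matrix (Fin n) (Fin n) ℝ, IsUnit P ∧
      ∀ i : Fin q, Pᵀ * (A i) * P =
        Matrix.diagonal (fun j : Fin n =>
          if (∑ l ∈ Finset.univ.filter (· < i), r l) ≤ (j : ℕ) ∧
             (j : ℕ) < (∑ l ∈ Finset.univ.filter (· < i), r l) + r i then (1 : ℝ) else 0) := by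
  classical
  set m := ∑ i, r i with hmdef
  -- the family of all columns
  set v : (Σ i : Fin q, Fin (r i)) → (Fin n → ℝ) := fun s a => B s.1 a s.2 with hv
  have hrange : Set.range v =
      {w : Fin n → ℝ | ∃ i : Fin q, ∃ j : Fin (r i), w = fun a => B i a j} := by
    ext w
    constructor
    · rintro ⟨⟨i, j⟩, rfl⟩; exact ⟨i, j, rfl⟩
    · rintro ⟨i, j, rfl⟩; exact ⟨⟨i, j⟩, rfl⟩
  -- linear independence
  have hli : LinearIndependent ℝ v := by
    rw [linearIndependent_iff_card_eq_finrank_span]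
    rw [Set.finrank, hrange, hspread, Fintype.card_sigma]
    simp [hmdef]
  -- complement subspace
  set W := Submodule.span ℝ (Set.range v) with hW
  have hWrank : Module.finrank ℝ W = m := by
    rw [hW, hrange]; exact hspread
  obtain ⟨Wc, hWc⟩ := Submodule.exists_isCompl W
  have hWcrank : Module.finrank ℝ Wc = n - m := by
    have h1 := Submodule.finrank_add_eq_of_isCompl hWc
    rw [hWrank] at h1
    have h2 : Module.finrank ℝ (Fin n → ℝ) = n := by simp
    omega
  let c : Module.Basis (Fin (n - m)) ℝ Wc := Module.finBasisOfFinrankEq ℝ Wc hWcrank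
  -- the combined family is a basis
  set u : ((Σ i : Fin q, Fin (r i)) ⊕ Fin (n - m)) → (Fin n → ℝ) :=
    Sum.elim v (fun k => (c k : Fin n → ℝ)) with hu
  have hlic : LinearIndependent ℝ (fun k => (c k : Fin n → ℝ)) :=
    c.linearIndependent.map' Wc.subtype (Submodule.ker_subtype Wc)
  have hspanc : Submodule.span ℝ (Set.range fun k => (c k : Fin n → ℝ)) = Wc := by
    have : (Set.range fun k => (c k : Fin n → ℝ)) = Wc.subtype '' Set.range c := by
      ext w; simp [Set.range_comp]
    rw [this, ← Submodule.map_span, c.span_eq, Submodule.map_top, Submodule.range_subtype]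
  have hliu : LinearIndependent ℝ u := by
    refine hli.sum_type hlic ?_
    rw [hspanc, ← hW]
    exact hWc.disjoint
  have hspanu : ⊤ ≤ Submodule.span ℝ (Set.range u) := by
    rw [hu, Set.Sum.elim_range, Submodule.span_union, hspanc, ← hW, hWc.sup_eq_top]
  let bU : Module.Basis ((Σ i : Fin q, Fin (r i)) ⊕ Fin (n - m)) ℝ (Fin n → ℝ) :=
    Module.Basis.mk hliu hspanu
  -- the index equivalence
  let emb := stmt4Emb r hm
  have hembinj := stmt4Emb_injective r hm
  let e1 : (Σ i : Fin q, Fin (r i)) ≃ {x : Fin n // x ∈ Set.range emb} :=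
    Equiv.ofInjective emb hembinj
  have hcard : Fintype.card {x : Fin n // ¬ x ∈ Set.range emb} = n - m := by
    have h1 : Fintype.card {x : Fin n // x ∈ Set.range emb} = m := by
      rw [Fintype.card_congr e1.symm, Fintype.card_sigma]
      simp [hmdef]
    have h2 := Fintype.card_subtype_compl (fun x : Fin n => x ∈ Set.range emb)
    rw [h1, Fintype.card_fin] at h2
    exact h2
  let e2 : Fin (n - m) ≃ {x : Fin n // ¬ x ∈ Set.range emb} :=
    (Fintype.equivFinOfCardEq hcard).symm
  let e : ((Σ i : Fin q, Fin (r i)) ⊕ Fin (n - m)) ≃ Fin n :=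
    (Equiv.sumCongr e1 e2).trans (Equiv.sumCompl (fun x : Fin n => x ∈ Set.range emb))
  have he : ∀ s, e (Sum.inl s) = emb s := fun s => rfl
  -- the basis indexed by Fin n
  let β : Module.Basis (Fin n) ℝ (Fin n → ℝ) := bU.reindex e
  have hβ : ∀ s, β (emb s) = v s := by
    intro s
    have h1 : e.symm (emb s) = Sum.inl s := by
      rw [← he s, Equiv.symm_apply_apply]
    rw [Module.Basis.reindex_apply, h1]
    simp [bU, Module.Basis.coe_mk, hu]
  -- the change of basis matrix
  let M : Matrix (Fin n) (Fin n) ℝ := (Pi.basisFun ℝ (Fin n)).toMatrix β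
  have hM : ∀ k l, M k l = β l k := by
    intro k l
    simp [M, Module.Basis.toMatrix_apply]
  have hMunit : IsUnit M := by
    have := (Pi.basisFun ℝ (Fin n)).invertibleToMatrix β
    exact isUnit_of_invertible M
  have hMdet : IsUnit M.det := (Matrix.isUnit_iff_isUnit_det M).mp hMunit
  -- selection matrices
  let S : (i : Fin q) → Matrix (Fin n) (Fin (r i)) ℝ :=
    fun i => Matrix.of fun k j => if k = emb ⟨i, j⟩ then (1 : ℝ) else 0
  have hMS : ∀ i, M * S i = B i := by
    intro i
    ext k j
    simp only [Matrix.mul_apply, S, Matrix.of_apply, mul_ite, mul_one, mul_zero]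
    rw [Finset.sum_ite_eq' Finset.univ (emb ⟨i, j⟩) (fun l => M k l)]
    simp only [Finset.mem_univ, if_true]
    rw [hM, hβ ⟨i, j⟩]
  have hinvB : ∀ i, M⁻¹ * B i = S i := by
    intro i
    rw [← hMS i, ← Matrix.mul_assoc, Matrix.nonsing_inv_mul M hMdet, Matrix.one_mul]
  -- S i * (S i)ᵀ is the diagonal matrix
  have hSS : ∀ i, S i * (S i)ᵀ =
      Matrix.diagonal (fun j : Fin n =>
        if (∑ l ∈ Finset.univ.filter (· < i), r l) ≤ (j : ℕ) ∧
           (j : ℕ) < (∑ l ∈ Finset.univ.filter (· < i), r l) + r i then (1 : ℝ) else 0) := by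
    intro i
    ext k k'
    simp only [Matrix.mul_apply, Matrix.transpose_apply, S, Matrix.of_apply,
      Matrix.diagonal_apply]
    by_cases hkk : k = k'
    · subst hkk
      simp only [if_pos rfl]
      by_cases hr : (∑ l ∈ Finset.univ.filter (· < i), r l) ≤ (k : ℕ) ∧
          (k : ℕ) < (∑ l ∈ Finset.univ.filter (· < i), r l) + r i
      · rw [if_pos hr]
        have hj0 : (k : ℕ) - stmt4Off r i < r i := by
          have := hr.1; have := hr.2; unfold stmt4Off; omega
        set j0 : Fin (r i) := ⟨(k : ℕ) - stmt4Off r i, hj0⟩ with hj0def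
        have hkey : ∀ j : Fin (r i), (k = emb ⟨i, j⟩) ↔ j = j0 := by
          intro j
          constructor
          · intro h
            have : (k : ℕ) = stmt4Off r i + j := by
              rw [h]; rfl
            simp only [hj0def, Fin.ext_iff]
            omega
          · intro h
            subst h
            have : (k : ℕ) = stmt4Off r i + ((k : ℕ) - stmt4Off r i) := by
              have := hr.1; exact (Nat.add_sub_cancel' this).symm
            apply Fin.ext
            exact this
        calc (∑ j : Fin (r i), (if k = emb ⟨i, j⟩ then (1:ℝ) else 0) *
                (if k = emb ⟨i, j⟩ then (1:ℝ) else 0))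
            = ∑ j : Fin (r i), (if j = j0 then (1:ℝ) else 0) := by
              apply Finset.sum_congr rfl
              intro j _
              by_cases h : k = emb ⟨i, j⟩
              · rw [if_pos h, if_pos ((hkey j).mp h), mul_one]
              · rw [if_neg h, zero_mul,
                  if_neg (fun hj => h (((hkey j).mpr hj) ▸ rfl))]
          _ = 1 := by simp
      · rw [if_neg hr]
        apply Finset.sum_eq_zero
        intro j _
        have h : k ≠ emb ⟨i, j⟩ := by
          intro h
          have hkv : (k : ℕ) = stmt4Off r i + j := by rw [h]; rfl
          have hjlt : (j : ℕ) < r i := j.isLt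
          unfold stmt4Off at hkv
          exact hr ⟨by omega, by omega⟩
        rw [if_neg h, zero_mul]
    · rw [if_neg hkk]
      apply Finset.sum_eq_zero
      intro j _
      by_cases h1 : k = emb ⟨i, j⟩
      · by_cases h2 : k' = emb ⟨i, j⟩
        · exact absurd (h1.trans h2.symm) hkk
        · rw [if_neg h2, mul_zero]
      · rw [if_neg h1, zero_mul]
  -- put everything together
  refine ⟨(M⁻¹)ᵀ, ?_, ?_⟩
  · rw [Matrix.isUnit_iff_isUnit_det, Matrix.det_transpose,
      Matrix.isUnit_nonsing_inv_det_iff]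
    exact hMdet
  · intro i
    have hkey : M⁻¹ * (B i * (B i)ᵀ) * (M⁻¹)ᵀ = (M⁻¹ * B i) * (M⁻¹ * B i)ᵀ := by
      rw [Matrix.transpose_mul]
      simp only [Matrix.mul_assoc]
    rw [Matrix.transpose_transpose, hB i, hkey, hinvB i, hSS i]
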